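/- For all integers n, m with m ≤ n, Σ_{j=m}^{n} (-1)^{n+j} js(n,j) · JS(j,m) = δ_{n,m} (biorthogonality of Jacobi-Stirling numbers of the first and second kind). -/

import Mathlib

/-- Jacobi-Stirling numbers of the second kind, defined by the triangular
recurrence and initial conditions. -/
def JS {R : Type*} [CommRing R] (γ : R) : ℕ → ℕ → R
  | 0, 0 => 1
  | _ + 1, 0 => 0
  | 0, _ + 1 => 0
  | n + 1, j + 1 => JS γ n j + ((j : R) + 1) * (((j : R) + 1) + 2 * γ - 1) * JS γ n (j + 1)

/-- Signless Jacobi-Stirling numbers of the first kind, defined by the triangular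
recurrence and initial conditions. -/
def js {R : Type*} [CommRing R] (γ : R) : ℕ → ℕ → R
  | 0, 0 => 1
  | _ + 1, 0 => 0
  | 0, _ + 1 => 0
  | n + 1, j + 1 => js γ n j + (n : R) * ((n : R) + 2 * γ - 1) * js γ n (j + 1)

section Aux

variable {R : Type*} [CommRing R] (γ : R)

lemma JS_zero : ∀ n j : ℕ, n < j → JS γ n j = 0
  | 0, _ + 1, _ => rfl
  | n + 1, j + 1, h => by
    have h' : n < j := Nat.lt_of_succ_lt_succ h
    simp [JS, JS_zero n j h', JS_zero n (j + 1) (h'.trans j.lt_succ_self)]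

lemma js_zero : ∀ n j : ℕ, n < j → js γ n j = 0
  | 0, _ + 1, _ => rfl
  | n + 1, j + 1, h => by
    have h' : n < j := Nat.lt_of_succ_lt_succ h
    simp [js, js_zero n j h', js_zero n (j + 1) (h'.trans j.lt_succ_self)]

lemma JS_diag : ∀ n : ℕ, JS γ n n = 1
  | 0 => rfl
  | n + 1 => by simp [JS, JS_diag n, JS_zero γ n (n + 1) n.lt_succ_self]

lemma js_diag : ∀ n : ℕ, js γ n n = 1
  | 0 => rfl
  | n + 1 => by simp [js, js_diag n, js_zero γ n (n + 1) n.lt_succ_self]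

lemma JS_key : ∀ n : ℕ, ∀ m ≤ n,
    ∑ j ∈ Finset.range (n + 1), (-1 : R) ^ (n + j) * js γ n j * JS γ j m
      = if n = m then 1 else 0 := by
  intro n
  induction n with
  | zero =>
    intro m hm
    interval_cases m
    simp [js, JS]
  | succ n ih =>
    intro m hm
    rcases eq_or_lt_of_le hm with heq | hlt
    · -- diagonal case m = n + 1
      subst heq
      rw [Finset.sum_range_succ, Finset.sum_eq_zero, zero_add]
      · have hpow : (-1 : R) ^ (n + 1 + (n + 1)) = 1 := Even.neg_one_pow ⟨n + 1, rfl⟩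
        simp [js_diag, JS_diag, hpow]
      · intro j hj
        rw [JS_zero γ j (n + 1) (Finset.mem_range.mp hj), mul_zero]
    · have hm' : m ≤ n := Nat.lt_succ_iff.mp hlt
      rcases m with _ | m'
      · -- m = 0
        rw [Finset.sum_range_succ']
        simp [js, JS]
      · -- m = m' + 1
        set cm : R := ((m' : R) + 1) * (((m' : R) + 1) + 2 * γ - 1) with hcm
        set cn : R := (n : R) * ((n : R) + 2 * γ - 1) with hcn
        have step : ∀ k ∈ Finset.range (n + 1),
            (-1 : R) ^ (n + 1 + (k + 1)) * js γ (n + 1) (k + 1) * JS γ (k + 1) (m' + 1)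
              = ((-1 : R) ^ (n + k) * js γ n k * JS γ k m'
                  + cm * ((-1 : R) ^ (n + k) * js γ n k * JS γ k (m' + 1)))
                - cn * ((-1 : R) ^ (n + (k + 1)) * js γ n (k + 1) * JS γ (k + 1) (m' + 1)) := by
          intro k _
          have hpow : (-1 : R) ^ (n + 1 + (k + 1)) = (-1 : R) ^ (n + k) := by
            rw [show n + 1 + (k + 1) = (n + k) + 2 by ring, pow_add]
            norm_num
          have hpow2 : (-1 : R) ^ (n + (k + 1)) = -(-1 : R) ^ (n + k) := by
            rw [show n + (k + 1) = (n + k) + 1 by ring, pow_succ]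
            ring
          have hjs : js γ (n + 1) (k + 1) = js γ n k + cn * js γ n (k + 1) := by
            rw [js, hcn]
          have hJS : JS γ (k + 1) (m' + 1) = JS γ k m' + cm * JS γ k (m' + 1) := by
            rw [JS, hcm]
          rw [hpow, hpow2, hjs, hJS]
          ring
        rw [Finset.sum_range_succ']
        have hzero : (-1 : R) ^ (n + 1 + 0) * js γ (n + 1) 0 * JS γ 0 (m' + 1) = 0 := by
          simp [js]
        rw [hzero, add_zero, Finset.sum_congr rfl step, Finset.sum_sub_distrib,
          Finset.sum_add_distrib, ← Finset.mul_sum, ← Finset.mul_sum]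
        have hA : ∑ k ∈ Finset.range (n + 1), (-1 : R) ^ (n + k) * js γ n k * JS γ k m'
            = if n = m' then 1 else 0 := ih m' (le_of_lt (Nat.lt_of_lt_of_le m'.lt_succ_self hm'))
        have hB : ∑ k ∈ Finset.range (n + 1), (-1 : R) ^ (n + k) * js γ n k * JS γ k (m' + 1)
            = if n = m' + 1 then 1 else 0 := ih (m' + 1) hm'
        have hnm' : n ≠ m' := Nat.ne_of_gt (Nat.lt_of_lt_of_le m'.lt_succ_self hm')
        have hD : ∑ k ∈ Finset.range (n + 1),
            (-1 : R) ^ (n + (k + 1)) * js γ n (k + 1) * JS γ (k + 1) (m' + 1)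
              = if n = m' + 1 then 1 else 0 := by
          have h1 := Finset.sum_range_succ'
            (fun j => (-1 : R) ^ (n + j) * js γ n j * JS γ j (m' + 1)) (n + 1)
          have h2 := Finset.sum_range_succ
            (fun j => (-1 : R) ^ (n + j) * js γ n j * JS γ j (m' + 1)) (n + 1)
          rw [h2] at h1
          rw [js_zero γ n (n + 1) n.lt_succ_self] at h1
          have hJS0 : JS γ 0 (m' + 1) = 0 := rfl
          rw [hJS0] at h1
          simp only [mul_zero, zero_mul, add_zero] at h1
          rw [← h1, hB]
        rw [hA, hB, hD]
        have hfalse : ¬ (n + 1 = m' + 1) := by omega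
        rw [if_neg hfalse]
        by_cases hnm : n = m' + 1
        · subst hnm
          simp only [if_pos rfl, if_neg hnm', mul_one, add_zero]
          rw [hcm, hcn]
          push_cast
          ring
        · simp [hnm, hnm']

end Aux

/-- Biorthogonality of the Jacobi-Stirling numbers of the first and second kinds. -/
theorem JS_biorthogonality_first {R : Type*} [CommRing R] (γ : R) (n m : ℕ) (h : m ≤ n) :
    ∑ j ∈ Finset.Icc m n, (-1 : R) ^ (n + j) * js γ n j * JS γ j m =
      if n = m then 1 else 0 := by
  rw [← JS_key γ n m h]
  apply Finset.sum_subset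
  · intro j hj
    rw [Finset.mem_Icc] at hj
    rw [Finset.mem_range]
    omega
  · intro j hj hj'
    rw [Finset.mem_range] at hj
    rw [Finset.mem_Icc] at hj'
    have : j < m := by omega
    rw [JS_zero γ j m this, mul_zero]
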